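/- Let ν be a non-degenerate probability measure on ℝ with support bounded from above. Then lim_{z→+∞} K_ν(z) = m₀(ν) ≥ −∞, i.e. the limit of the K-transform as z → +∞ along the reals exists in [−∞, +∞) and equals the left endpoint m₀(ν) = lim_{θ→0⁺} k_ν(θ) of the domain of means (which is the mean ∫ x dν(x) when ν has a first moment). -/

import Mathlib

open MeasureTheory Filter Topology Set

/-- The Cauchy transform `G_ν(z) = ∫ 1/(z-x) dν(x)` of a measure on `ℝ`, for real `z`. -/
noncomputable def cauchyT (ν : Measure ℝ) (z : ℝ) : ℝ := ∫ x, (z - x)⁻¹ ∂ν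

/-- The K-transform (self-energy) `K_ν(z) = z - 1/G_ν(z)`. -/
noncomputable def kT (ν : Measure ℝ) (z : ℝ) : ℝ := z - (cauchyT ν z)⁻¹

/-- `M_ν(θ) = ∫ 1/(1-θx) dν(x)`. -/
noncomputable def Mgen (ν : Measure ℝ) (θ : ℝ) : ℝ := ∫ x, (1 - θ * x)⁻¹ ∂ν

/-- The mean of `P_{(θ,ν)}`: `k_ν(θ) = (M_ν(θ) - 1)/(θ M_ν(θ))`. -/
noncomputable def kMean (ν : Measure ℝ) (θ : ℝ) : ℝ := (Mgen ν θ - 1) / (θ * Mgen ν θ)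

namespace KTaux

lemma aux_ae (ν : Measure ℝ) (b : ℝ) (hb : ν (Set.Ioi b) = 0) : ∀ᵐ x ∂ν, x ≤ b := by
  rw [ae_iff]; convert hb using 2; ext x; simp [not_le]

-- lower bound on the denominator
lemma denom_ge (c θ x : ℝ) (hc : 0 ≤ c) (hθ : θ ∈ Ioc 0 ((2*(c+1))⁻¹)) (hx : x ≤ c) :
    (1:ℝ)/2 ≤ 1 - θ * x := by
  obtain ⟨hθ0, hθδ⟩ := hθ
  rcases le_or_gt x 0 with h | h
  · nlinarith
  · have h1 : θ * x ≤ (2*(c+1))⁻¹ * c := by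
      apply mul_le_mul hθδ hx h.le (by positivity)
    have h2 : (2*(c+1))⁻¹ * (2*(c+1)) = 1 := inv_mul_cancel₀ (by positivity)
    nlinarith [inv_pos.2 (show (0:ℝ) < 2*(c+1) by positivity)]

-- bound for x ≤ 0, θ > 0 :  -x/(1-θx) ≤ θ⁻¹ and 0 ≤ -x/(1-θx)
lemma neg_part_bound (θ x : ℝ) (hθ : 0 < θ) (hx : x ≤ 0) :
    0 ≤ -x * (1 - θ * x)⁻¹ ∧ -x * (1 - θ * x)⁻¹ ≤ θ⁻¹ := by
  have hden : (1:ℝ) ≤ 1 - θ * x := by nlinarith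
  have hdenpos : (0:ℝ) < 1 - θ * x := by linarith
  constructor
  · exact mul_nonneg (by linarith) (inv_nonneg.2 hdenpos.le)
  · rw [mul_inv_le_iff₀ hdenpos]
    have h := inv_mul_cancel₀ hθ.ne'
    nlinarith [inv_nonneg.2 hθ.le]


lemma u_bounds (c θ x : ℝ) (hc : 0 ≤ c) (hθ : θ ∈ Ioc 0 ((2*(c+1))⁻¹)) (hx : x ≤ c) :
    0 < (1 - θ * x)⁻¹ ∧ (1 - θ * x)⁻¹ ≤ 2 := by
  have h := denom_ge c θ x hc hθ hx
  have hpos : (0:ℝ) < 1 - θ * x := by linarith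
  refine ⟨inv_pos.2 hpos, ?_⟩
  calc (1 - θ * x)⁻¹ ≤ ((1:ℝ)/2)⁻¹ := inv_anti₀ (by norm_num) h
    _ = 2 := by norm_num

lemma meas_u (θ : ℝ) : Measurable fun x : ℝ => (1 - θ * x)⁻¹ :=
  (measurable_const.sub (measurable_const.mul measurable_id)).inv

lemma int_u (ν : Measure ℝ) [IsProbabilityMeasure ν] (c θ : ℝ) (hc : 0 ≤ c)
    (hθ : θ ∈ Ioc 0 ((2*(c+1))⁻¹)) (hae : ∀ᵐ x ∂ν, x ≤ c) :
    Integrable (fun x => (1 - θ * x)⁻¹) ν := by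
  refine (integrable_const (2:ℝ)).mono' (meas_u θ).aestronglyMeasurable ?_
  filter_upwards [hae] with x hx
  obtain ⟨h1, h2⟩ := u_bounds c θ x hc hθ hx
  rw [Real.norm_eq_abs, abs_of_pos h1]; exact h2

lemma xu_bound (c θ x : ℝ) (hc : 0 ≤ c) (hθ : θ ∈ Ioc 0 ((2*(c+1))⁻¹)) (hx : x ≤ c) :
    ‖x * (1 - θ * x)⁻¹‖ ≤ θ⁻¹ + 2 * c := by
  have hθ0 := hθ.1
  have hθinv : (0:ℝ) < θ⁻¹ := inv_pos.2 hθ0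
  rcases le_or_gt x 0 with h | h
  · obtain ⟨h1, h2⟩ := neg_part_bound θ x hθ0 h
    have hden : (0:ℝ) < 1 - θ * x := by nlinarith
    have : x * (1 - θ * x)⁻¹ ≤ 0 := mul_nonpos_of_nonpos_of_nonneg h (inv_nonneg.2 hden.le)
    rw [Real.norm_eq_abs, abs_of_nonpos this]
    have : -(x * (1 - θ * x)⁻¹) = -x * (1 - θ * x)⁻¹ := by ring
    rw [this]; nlinarith
  · obtain ⟨h1, h2⟩ := u_bounds c θ x hc hθ hx
    have : x * (1 - θ * x)⁻¹ ≤ c * 2 := mul_le_mul hx h2 h1.le hc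
    rw [Real.norm_eq_abs, abs_of_nonneg (mul_nonneg h.le h1.le)]
    nlinarith

lemma int_xu (ν : Measure ℝ) [IsProbabilityMeasure ν] (c θ : ℝ) (hc : 0 ≤ c)
    (hθ : θ ∈ Ioc 0 ((2*(c+1))⁻¹)) (hae : ∀ᵐ x ∂ν, x ≤ c) :
    Integrable (fun x => x * (1 - θ * x)⁻¹) ν := by
  refine (integrable_const (θ⁻¹ + 2*c)).mono'
    (measurable_id.mul (meas_u θ)).aestronglyMeasurable ?_
  filter_upwards [hae] with x hx
  exact xu_bound c θ x hc hθ hx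

lemma neg_integral_eq (ν : Measure ℝ) [IsProbabilityMeasure ν] (θ : ℝ) (hθ0 : 0 < θ) :
    ∫ x in Iio (0:ℝ), x * (1 - θ * x)⁻¹ ∂ν
      = - (∫⁻ x in Iio (0:ℝ), ENNReal.ofReal (-x * (1 - θ * x)⁻¹) ∂ν).toReal := by
  have h2 : ∫ x in Iio (0:ℝ), (-x * (1 - θ * x)⁻¹) ∂ν
      = (∫⁻ x in Iio (0:ℝ), ENNReal.ofReal (-x * (1 - θ * x)⁻¹) ∂ν).toReal := by
    refine integral_eq_lintegral_of_nonneg_ae ?_ ?_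
    · filter_upwards [ae_restrict_mem measurableSet_Iio] with x hx
      exact (neg_part_bound θ x hθ0 (le_of_lt hx)).1
    · exact (measurable_neg.mul (meas_u θ)).aestronglyMeasurable
  have h3 : (fun x : ℝ => x * (1 - θ * x)⁻¹) = fun x => -(-x * (1 - θ * x)⁻¹) := by
    funext x; ring
  rw [h3, integral_neg, h2]

lemma A_split (ν : Measure ℝ) [IsProbabilityMeasure ν] (c θ : ℝ) (hc : 0 ≤ c)
    (hθ : θ ∈ Ioc 0 ((2*(c+1))⁻¹)) (hae : ∀ᵐ x ∂ν, x ≤ c) :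
    ∫ x, x * (1 - θ * x)⁻¹ ∂ν
      = (∫ x in (Iio (0:ℝ))ᶜ, x * (1 - θ * x)⁻¹ ∂ν)
        - (∫⁻ x in Iio (0:ℝ), ENNReal.ofReal (-x * (1 - θ * x)⁻¹) ∂ν).toReal := by
  have h1 := integral_add_compl (measurableSet_Iio (a := (0:ℝ))) (int_xu ν c θ hc hθ hae)
  have h2 := neg_integral_eq ν θ hθ.1
  linarith [h1, h2]

lemma M_sub_one (ν : Measure ℝ) [IsProbabilityMeasure ν] (c θ : ℝ) (hc : 0 ≤ c)
    (hθ : θ ∈ Ioc 0 ((2*(c+1))⁻¹)) (hae : ∀ᵐ x ∂ν, x ≤ c) :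
    Mgen ν θ - 1 = θ * ∫ x, x * (1 - θ * x)⁻¹ ∂ν := by
  have h1 : Mgen ν θ - 1 = ∫ x, ((1 - θ * x)⁻¹ - 1) ∂ν := by
    rw [integral_sub (int_u ν c θ hc hθ hae) (integrable_const 1)]
    simp [Mgen]
  rw [h1, ← integral_const_mul]
  refine integral_congr_ae ?_
  filter_upwards [hae] with x hx
  have hd : (1:ℝ) - θ * x ≠ 0 := by have := denom_ge c θ x hc hθ hx; linarith
  field_simp
  ring

lemma kMean_eq (ν : Measure ℝ) [IsProbabilityMeasure ν] (c θ : ℝ) (hc : 0 ≤ c)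
    (hθ : θ ∈ Ioc 0 ((2*(c+1))⁻¹)) (hae : ∀ᵐ x ∂ν, x ≤ c) :
    kMean ν θ = (∫ x, x * (1 - θ * x)⁻¹ ∂ν) / Mgen ν θ := by
  have h := M_sub_one ν c θ hc hθ hae
  rw [kMean, h, mul_div_mul_left _ _ (ne_of_gt hθ.1)]

lemma tendsto_M (ν : Measure ℝ) [IsProbabilityMeasure ν] (c : ℝ) (hc : 0 ≤ c)
    (hae : ∀ᵐ x ∂ν, x ≤ c) :
    Tendsto (fun θ => Mgen ν θ) (𝓝[>] (0:ℝ)) (𝓝 1) := by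
  have hmem : Ioc (0:ℝ) ((2*(c+1))⁻¹) ∈ 𝓝[>] (0:ℝ) :=
    Ioc_mem_nhdsGT_of_mem ⟨le_rfl, by positivity⟩
  have h : Tendsto (fun θ => ∫ x, (1 - θ * x)⁻¹ ∂ν) (𝓝[>] (0:ℝ)) (𝓝 (∫ _x, (1:ℝ) ∂ν)) := by
    refine tendsto_integral_filter_of_dominated_convergence (fun _ => (2:ℝ)) ?_ ?_
      (integrable_const 2) ?_
    · exact Eventually.of_forall fun θ => (meas_u θ).aestronglyMeasurable
    · filter_upwards [hmem] with θ hθ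
      filter_upwards [hae] with x hx
      obtain ⟨h1, h2⟩ := u_bounds c θ x hc hθ hx
      rw [Real.norm_eq_abs, abs_of_pos h1]; exact h2
    · refine Eventually.of_forall fun x => ?_
      have hcont : Tendsto (fun θ : ℝ => 1 - θ * x) (𝓝 0) (𝓝 (1 - 0 * x)) :=
        (continuous_const.sub (continuous_id.mul continuous_const)).tendsto 0
      have h2 : Tendsto (fun θ : ℝ => (1 - θ * x)⁻¹) (𝓝[>] (0:ℝ)) (𝓝 ((1 - 0 * x)⁻¹)) :=
        (hcont.inv₀ (by norm_num)).mono_left nhdsWithin_le_nhds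
      simpa using h2
  simpa [Mgen] using h

lemma tendsto_P (ν : Measure ℝ) [IsProbabilityMeasure ν] (c : ℝ) (hc : 0 ≤ c)
    (hae : ∀ᵐ x ∂ν, x ≤ c) :
    Tendsto (fun θ => ∫ x in (Iio (0:ℝ))ᶜ, x * (1 - θ * x)⁻¹ ∂ν) (𝓝[>] (0:ℝ))
      (𝓝 (∫ x in (Iio (0:ℝ))ᶜ, x ∂ν)) := by
  have hmem : Ioc (0:ℝ) ((2*(c+1))⁻¹) ∈ 𝓝[>] (0:ℝ) :=
    Ioc_mem_nhdsGT_of_mem ⟨le_rfl, by positivity⟩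
  have haer : ∀ᵐ x ∂(ν.restrict (Iio (0:ℝ))ᶜ), x ≤ c := ae_restrict_of_ae hae
  have haepos : ∀ᵐ x ∂(ν.restrict (Iio (0:ℝ))ᶜ), 0 ≤ x := by
    filter_upwards [ae_restrict_mem measurableSet_Iio.compl] with x hx
    simpa using hx
  refine tendsto_integral_filter_of_dominated_convergence (fun _ => 2*c) ?_ ?_
    (integrable_const _) ?_
  · exact Eventually.of_forall fun θ =>
      (measurable_id.mul (meas_u θ)).aestronglyMeasurable
  · filter_upwards [hmem] with θ hθ
    filter_upwards [haer, haepos] with x hx hx0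
    obtain ⟨h1, h2⟩ := u_bounds c θ x hc hθ hx
    rw [Real.norm_eq_abs, abs_of_nonneg (mul_nonneg hx0 h1.le)]
    calc x * (1 - θ * x)⁻¹ ≤ c * 2 := mul_le_mul hx h2 h1.le hc
      _ = 2 * c := by ring
  · refine Eventually.of_forall fun x => ?_
    have hcont : Tendsto (fun θ : ℝ => 1 - θ * x) (𝓝 0) (𝓝 (1 - 0 * x)) :=
      (continuous_const.sub (continuous_id.mul continuous_const)).tendsto 0
    have h2 : Tendsto (fun θ : ℝ => x * (1 - θ * x)⁻¹) (𝓝[>] (0:ℝ))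
        (𝓝 (x * (1 - 0 * x)⁻¹)) :=
      (tendsto_const_nhds.mul (hcont.inv₀ (by norm_num))).mono_left nhdsWithin_le_nhds
    simpa using h2

lemma N_antitone (ν : Measure ℝ) [IsProbabilityMeasure ν] :
    AntitoneOn (fun θ => ∫⁻ x in Iio (0:ℝ), ENNReal.ofReal (-x * (1 - θ * x)⁻¹) ∂ν)
      (Ioi (0:ℝ)) := by
  intro θ₁ h1 θ₂ h2 h12
  refine lintegral_mono_ae ?_
  filter_upwards [ae_restrict_mem measurableSet_Iio] with x hx
  refine ENNReal.ofReal_le_ofReal ?_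
  have hx0 : x < 0 := hx
  have hd1 : (0:ℝ) < 1 - θ₁ * x := by nlinarith [h1.out]
  have hd12 : 1 - θ₁ * x ≤ 1 - θ₂ * x := by nlinarith [h1.out]
  exact mul_le_mul_of_nonneg_left (inv_anti₀ hd1 hd12) (by linarith)

lemma tendsto_N (ν : Measure ℝ) [IsProbabilityMeasure ν] :
    Tendsto (fun θ => ∫⁻ x in Iio (0:ℝ), ENNReal.ofReal (-x * (1 - θ * x)⁻¹) ∂ν)
      (𝓝[>] (0:ℝ)) (𝓝 (∫⁻ x in Iio (0:ℝ), ENNReal.ofReal (-x) ∂ν)) := by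
  set N : ℝ → ENNReal :=
    fun θ => ∫⁻ x in Iio (0:ℝ), ENNReal.ofReal (-x * (1 - θ * x)⁻¹) ∂ν with hN
  have h1 : Tendsto N (𝓝[>] (0:ℝ)) (𝓝 (sSup (N '' Ioi 0))) :=
    (N_antitone ν).tendsto_nhdsGT (OrderTop.bddAbove _)
  set θs : ℕ → ℝ := fun n => ((n:ℝ) + 1)⁻¹ with hθs
  have hθpos : ∀ n, 0 < θs n := fun n => by positivity
  have hθ0 : Tendsto θs atTop (𝓝 (0:ℝ)) := by
    simpa [hθs, one_div] using tendsto_one_div_add_atTop_nhds_zero_nat (𝕜 := ℝ)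
  have hθ0' : Tendsto θs atTop (𝓝[>] (0:ℝ)) :=
    tendsto_nhdsWithin_of_tendsto_nhds_of_eventually_within _ hθ0
      (Eventually.of_forall fun n => hθpos n)
  have hθanti : ∀ n m : ℕ, n ≤ m → θs m ≤ θs n := by
    intro n m hnm
    apply inv_anti₀ (by positivity)
    have : (n:ℝ) ≤ m := Nat.cast_le.2 hnm
    linarith
  have hB : Tendsto (fun n => N (θs n)) atTop
      (𝓝 (∫⁻ x in Iio (0:ℝ), ENNReal.ofReal (-x) ∂ν)) := by
    refine lintegral_tendsto_of_tendsto_of_monotone ?_ ?_ ?_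
    · exact fun n => ((measurable_neg.mul (meas_u (θs n))).ennreal_ofReal).aemeasurable
    · filter_upwards [ae_restrict_mem measurableSet_Iio] with x hx
      intro n m hnm
      refine ENNReal.ofReal_le_ofReal ?_
      have hx0 : x < 0 := hx
      have h1n := hθpos n
      have h1m := hθpos m
      have hmn := hθanti n m hnm
      have hd1 : (0:ℝ) < 1 - θs m * x := by nlinarith
      have hd12 : 1 - θs m * x ≤ 1 - θs n * x := by nlinarith
      exact mul_le_mul_of_nonneg_left (inv_anti₀ hd1 hd12) (by linarith)
    · filter_upwards [ae_restrict_mem measurableSet_Iio] with x hx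
      have hcont : Tendsto (fun t : ℝ => -x * (1 - t * x)⁻¹) (𝓝 0) (𝓝 (-x * (1 - 0 * x)⁻¹)) :=
        (tendsto_const_nhds.mul
          (((continuous_const.sub (continuous_id.mul continuous_const)).tendsto 0).inv₀
            (by norm_num)))
      have h2 := (ENNReal.continuous_ofReal.tendsto _).comp (hcont.comp hθ0)
      simpa [Function.comp_def] using h2
  have hA : Tendsto (fun n => N (θs n)) atTop (𝓝 (sSup (N '' Ioi 0))) := h1.comp hθ0'
  rw [← tendsto_nhds_unique hA hB]
  exact h1

lemma N_ne_top (ν : Measure ℝ) [IsProbabilityMeasure ν] (θ : ℝ) (hθ : 0 < θ) :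
    (∫⁻ x in Iio (0:ℝ), ENNReal.ofReal (-x * (1 - θ * x)⁻¹) ∂ν) ≠ ⊤ := by
  have hle : (∫⁻ x in Iio (0:ℝ), ENNReal.ofReal (-x * (1 - θ * x)⁻¹) ∂ν)
      ≤ ∫⁻ _x in Iio (0:ℝ), ENNReal.ofReal θ⁻¹ ∂ν := by
    refine setLIntegral_mono measurable_const ?_
    intro x hx
    exact ENNReal.ofReal_le_ofReal (neg_part_bound θ x hθ (le_of_lt hx)).2
  refine ne_top_of_le_ne_top ?_ hle
  rw [lintegral_const]
  exact ENNReal.mul_ne_top ENNReal.ofReal_ne_top (measure_ne_top _ _)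

lemma N0_ne_top (ν : Measure ℝ) [IsProbabilityMeasure ν]
    (hint : Integrable (fun x : ℝ => x) ν) :
    (∫⁻ x in Iio (0:ℝ), ENNReal.ofReal (-x) ∂ν) ≠ ⊤ := by
  have h := hint.hasFiniteIntegral
  rw [HasFiniteIntegral] at h
  refine ne_top_of_le_ne_top (ne_of_lt h) ?_
  calc (∫⁻ x in Iio (0:ℝ), ENNReal.ofReal (-x) ∂ν)
      ≤ ∫⁻ x, ENNReal.ofReal (-x) ∂ν := setLIntegral_le_lintegral _ _
    _ ≤ ∫⁻ x, (‖x‖₊ : ENNReal) ∂ν := by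
        refine lintegral_mono fun x => ?_
        rw [← enorm_eq_nnnorm, Real.enorm_eq_ofReal_abs]
        exact ENNReal.ofReal_le_ofReal (neg_le_abs x)

lemma integral_split (ν : Measure ℝ) [IsProbabilityMeasure ν]
    (hint : Integrable (fun x : ℝ => x) ν) :
    ∫ x, x ∂ν = (∫ x in (Iio (0:ℝ))ᶜ, x ∂ν)
      - (∫⁻ x in Iio (0:ℝ), ENNReal.ofReal (-x) ∂ν).toReal := by
  have h1 := integral_add_compl (measurableSet_Iio (a := (0:ℝ))) hint
  have h2 : ∫ x in Iio (0:ℝ), (-x) ∂ν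
      = (∫⁻ x in Iio (0:ℝ), ENNReal.ofReal (-x) ∂ν).toReal := by
    refine integral_eq_lintegral_of_nonneg_ae ?_ measurable_neg.aestronglyMeasurable
    filter_upwards [ae_restrict_mem measurableSet_Iio] with x hx
    simpa using le_of_lt hx
  have h3 : ∫ x in Iio (0:ℝ), x ∂ν = - ∫ x in Iio (0:ℝ), (-x) ∂ν := by
    rw [integral_neg]; ring
  linarith [h1, h2, h3]

lemma cauchy_pos (ν : Measure ℝ) [IsProbabilityMeasure ν] (c z : ℝ) (hc : 0 ≤ c)
    (hae : ∀ᵐ x ∂ν, x ≤ c) (hz : c < z) : 0 < cauchyT ν z := by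
  have hnn : 0 ≤ᵐ[ν] fun x => (z - x)⁻¹ := by
    filter_upwards [hae] with x hx
    have : (0:ℝ) < z - x := by linarith
    positivity
  have hint : Integrable (fun x => (z - x)⁻¹) ν := by
    refine (integrable_const ((z - c)⁻¹)).mono'
      ((measurable_const.sub measurable_id).inv).aestronglyMeasurable ?_
    filter_upwards [hae] with x hx
    have h1 : (0:ℝ) < z - x := by linarith
    rw [Real.norm_eq_abs, abs_of_pos (inv_pos.2 h1)]
    exact inv_anti₀ (by linarith) (by linarith)
  rw [cauchyT]
  refine (integral_pos_iff_support_of_nonneg_ae hnn hint).2 ?_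
  have hsupp : Function.support (fun x : ℝ => (z - x)⁻¹) = {z}ᶜ := by
    ext x
    simp only [Function.mem_support, ne_eq, inv_eq_zero, sub_eq_zero, mem_compl_iff,
      mem_singleton_iff]
    constructor
    · intro h h'; exact h (h' ▸ rfl)
    · intro h h'; exact h (h'.symm)
  rw [hsupp]
  have hz0 : ν {z} = 0 := by
    refine measure_mono_null ?_ (by
      have : ν (Set.Ioi c) = 0 := by
        refine measure_mono_null ?_ ((ae_iff.1 hae))
        intro x hx; simpa using not_le.2 (mem_Ioi.1 hx)
      exact this)
    intro x hx; rw [mem_singleton_iff] at hx; subst hx; exact hz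
  rw [measure_compl (measurableSet_singleton z) (measure_ne_top _ _), hz0]
  simp

lemma kT_eq_kMean_inv (ν : Measure ℝ) [IsProbabilityMeasure ν] (c z : ℝ) (hc : 0 ≤ c)
    (hae : ∀ᵐ x ∂ν, x ≤ c) (hz : 2 * (c + 1) ≤ z) :
    kT ν z = kMean ν z⁻¹ := by
  have hz0 : (0:ℝ) < z := by nlinarith
  have hcz : c < z := by nlinarith
  have hMz : Mgen ν z⁻¹ = z * cauchyT ν z := by
    rw [Mgen, cauchyT, ← integral_const_mul]
    refine integral_congr_ae (Eventually.of_forall fun x => ?_)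
    show (1 - z⁻¹ * x)⁻¹ = z * (z - x)⁻¹
    have h1 : 1 - z⁻¹ * x = (z - x) / z := by field_simp
    rw [h1, inv_div, div_eq_mul_inv]
  have hG := cauchy_pos ν c z hc hae hcz
  rw [kT, kMean, hMz]
  have h2 : z⁻¹ * (z * cauchyT ν z) = cauchyT ν z := by field_simp
  rw [h2]
  field_simp

end KTaux

/-- for a non-degenerate probability measure `ν` with support bounded from
above, the limit of the K-transform as `z → +∞` along the reals exists in `[-∞, +∞)`
and equals `m₀(ν) = lim_{θ→0⁺} k_ν(θ)`; when `ν` has a first moment, this limit is the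
mean `∫ x dν(x)`. -/
theorem kTransform_tendsto_m0
    (ν : Measure ℝ) [IsProbabilityMeasure ν]
    (hnd : ∀ a : ℝ, ν ≠ Measure.dirac a)
    (b : ℝ) (hb : ν (Set.Ioi b) = 0) :
    ∃ m0 : EReal, m0 < ⊤ ∧
      Tendsto (fun z : ℝ => (kT ν z : EReal)) atTop (𝓝 m0) ∧
      Tendsto (fun θ : ℝ => (kMean ν θ : EReal)) (𝓝[>] (0 : ℝ)) (𝓝 m0) ∧
      (Integrable (fun x : ℝ => x) ν → m0 = ((∫ x, x ∂ν : ℝ) : EReal)) := by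
  classical
  set c : ℝ := max b 0 with hcdef
  have hc : 0 ≤ c := le_max_right _ _
  have hae : ∀ᵐ x ∂ν, x ≤ c :=
    (KTaux.aux_ae ν b hb).mono fun x hx => hx.trans (le_max_left _ _)
  have hδpos : (0:ℝ) < (2*(c+1))⁻¹ := by positivity
  have hmem : Ioc (0:ℝ) ((2*(c+1))⁻¹) ∈ 𝓝[>] (0:ℝ) :=
    Ioc_mem_nhdsGT_of_mem ⟨le_rfl, hδpos⟩
  set N : ℝ → ENNReal :=
    fun θ => ∫⁻ x in Iio (0:ℝ), ENNReal.ofReal (-x * (1 - θ * x)⁻¹) ∂ν with hNdef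
  set Pf : ℝ → ℝ := fun θ => ∫ x in (Iio (0:ℝ))ᶜ, x * (1 - θ * x)⁻¹ ∂ν with hPdef
  set P₀ : ℝ := ∫ x in (Iio (0:ℝ))ᶜ, x ∂ν with hP₀def
  set N₀ : ENNReal := ∫⁻ x in Iio (0:ℝ), ENNReal.ofReal (-x) ∂ν with hN₀def
  have hM := KTaux.tendsto_M ν c hc hae
  have hP : Tendsto Pf (𝓝[>] (0:ℝ)) (𝓝 P₀) := KTaux.tendsto_P ν c hc hae
  have hN : Tendsto N (𝓝[>] (0:ℝ)) (𝓝 N₀) := KTaux.tendsto_N ν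
  -- eventual formula for kMean
  have hkMeq : ∀ᶠ θ in 𝓝[>] (0:ℝ),
      kMean ν θ = (Pf θ - (N θ).toReal) / Mgen ν θ := by
    filter_upwards [hmem] with θ hθ
    rw [KTaux.kMean_eq ν c θ hc hθ hae, KTaux.A_split ν c θ hc hθ hae]
  -- the bridge from kMean to kT
  have hbridge : ∀ m0 : EReal,
      Tendsto (fun θ : ℝ => (kMean ν θ : EReal)) (𝓝[>] (0:ℝ)) (𝓝 m0) →
      Tendsto (fun z : ℝ => (kT ν z : EReal)) atTop (𝓝 m0) := by
    intro m0 h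
    have hcomp : Tendsto (fun z : ℝ => (kMean ν z⁻¹ : EReal)) atTop (𝓝 m0) :=
      h.comp tendsto_inv_atTop_nhdsGT_zero
    refine hcomp.congr' ?_
    filter_upwards [eventually_ge_atTop (2*(c+1))] with z hz
    rw [← KTaux.kT_eq_kMean_inv ν c z hc hae hz]
  by_cases hN₀top : N₀ = ⊤
  · -- limit is ⊥
    have hkmR : Tendsto (fun θ : ℝ => kMean ν θ) (𝓝[>] (0:ℝ)) atBot := by
      have htoReal : Tendsto (fun θ : ℝ => (N θ).toReal) (𝓝[>] (0:ℝ)) atTop := by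
        rw [tendsto_atTop]
        intro C
        have h1 : Ioi (ENNReal.ofReal (max C 0)) ∈ 𝓝 N₀ := by
          rw [hN₀top]; exact Ioi_mem_nhds ENNReal.ofReal_lt_top
        filter_upwards [hN.eventually h1, hmem] with θ hθ1 hθ2
        have hfin : N θ ≠ ⊤ := KTaux.N_ne_top ν θ hθ2.1
        have := (ENNReal.ofReal_lt_iff_lt_toReal (le_max_right C 0) hfin).1 hθ1
        exact le_trans (le_max_left C 0) this.le
      have hA : Tendsto (fun θ : ℝ => Pf θ - (N θ).toReal) (𝓝[>] (0:ℝ)) atBot := by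
        simp_rw [sub_eq_add_neg]
        exact hP.add_atBot (tendsto_neg_atTop_atBot.comp htoReal)
      have hdiv : Tendsto (fun θ : ℝ => (Pf θ - (N θ).toReal) * (Mgen ν θ)⁻¹)
          (𝓝[>] (0:ℝ)) atBot :=
        hA.atBot_mul_pos one_pos (by simpa using hM.inv₀ one_ne_zero)
      refine Tendsto.congr' ?_ hdiv
      filter_upwards [hkMeq] with θ hθ
      rw [hθ, div_eq_mul_inv]
    have hkm : Tendsto (fun θ : ℝ => (kMean ν θ : EReal)) (𝓝[>] (0:ℝ)) (𝓝 ⊥) := by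
      rw [EReal.tendsto_nhds_bot_iff_real]
      intro R
      filter_upwards [hkmR.eventually (eventually_lt_atBot R)] with θ hθ
      exact_mod_cast hθ
    refine ⟨⊥, bot_lt_top, hbridge ⊥ hkm, hkm, ?_⟩
    intro hint
    exact absurd hN₀top (KTaux.N0_ne_top ν hint)
  · -- finite negative part
    have hAr : Tendsto (fun θ : ℝ => Pf θ - (N θ).toReal) (𝓝[>] (0:ℝ))
        (𝓝 (P₀ - N₀.toReal)) :=
      hP.sub ((ENNReal.tendsto_toReal hN₀top).comp hN)
    have hkmR : Tendsto (fun θ : ℝ => kMean ν θ) (𝓝[>] (0:ℝ)) (𝓝 (P₀ - N₀.toReal)) := by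
      have hdiv := hAr.div hM one_ne_zero
      rw [div_one] at hdiv
      refine Tendsto.congr' ?_ hdiv
      filter_upwards [hkMeq] with θ hθ
      rw [hθ]; rfl
    have hkm : Tendsto (fun θ : ℝ => (kMean ν θ : EReal)) (𝓝[>] (0:ℝ))
        (𝓝 ((P₀ - N₀.toReal : ℝ) : EReal)) := EReal.tendsto_coe.2 hkmR
    refine ⟨((P₀ - N₀.toReal : ℝ) : EReal), EReal.coe_lt_top _, hbridge _ hkm, hkm, ?_⟩
    intro hint
    rw [KTaux.integral_split ν hint]
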